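/- There exists a constant C > 0 such that for every integer M ≥ 2, ∫_0^{2π} | Σ_{k=0}^{M} k e^{ikx} | dx ≤ C · M · log M. -/

import Mathlib

open Complex Finset intervalIntegral

/-- Telescoping identity for `∑ k qᵏ`. -/
private lemma sum_mul_geom_id (M : ℕ) (q : ℂ) :
    (q - 1) * ∑ k ∈ Finset.range (M + 1), (k : ℂ) * q ^ k
      = (M : ℂ) * q ^ (M + 1) - (∑ k ∈ Finset.range (M + 1), q ^ k) + 1 := by
  induction M with
  | zero => simp
  | succ n ih =>
      rw [Finset.sum_range_succ ((fun k : ℕ => (k : ℂ) * q ^ k)), Finset.sum_range_succ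
        (fun k : ℕ => q ^ k)]
      push_cast
      push_cast at ih
      linear_combination ih

private lemma abs_sum_le (M : ℕ) (q : ℂ) (hq : ‖q‖ = 1) (hq1 : q ≠ 1) :
    ‖∑ k ∈ Finset.range (M + 1), (k : ℂ) * q ^ k‖
      ≤ ((M : ℝ) + 1) / ‖q - 1‖ + 2 / ‖q - 1‖ ^ 2 := by
  have hd0 : q - 1 ≠ 0 := sub_ne_zero.mpr hq1
  have hd : 0 < ‖q - 1‖ := norm_pos_iff.mpr hd0
  set G : ℂ := ∑ k ∈ Finset.range (M + 1), q ^ k with hGdef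
  have hG : ‖G‖ ≤ 2 / ‖q - 1‖ := by
    have h := geom_sum_eq hq1 (M + 1)
    rw [hGdef, h, norm_div]
    apply div_le_div_of_nonneg_right ?_ hd.le |>.trans_eq rfl
    calc ‖q ^ (M + 1) - 1‖ ≤ ‖q ^ (M + 1)‖ + ‖(1 : ℂ)‖ := by
          simpa [sub_eq_add_neg] using norm_add_le (q ^ (M + 1)) (-1)
      _ = 2 := by rw [norm_pow, hq]; norm_num
  have hS : (∑ k ∈ Finset.range (M + 1), (k : ℂ) * q ^ k)
      = ((M : ℂ) * q ^ (M + 1) - G + 1) / (q - 1) := by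
    rw [eq_div_iff hd0]
    linear_combination sum_mul_geom_id M q
  rw [hS, norm_div]
  have hnum : ‖(M : ℂ) * q ^ (M + 1) - G + 1‖
      ≤ (M : ℝ) + 1 + 2 / ‖q - 1‖ := by
    calc ‖(M : ℂ) * q ^ (M + 1) - G + 1‖
        ≤ ‖(M : ℂ) * q ^ (M + 1) - G‖ + ‖(1 : ℂ)‖ :=
          norm_add_le _ _
      _ ≤ ‖(M : ℂ) * q ^ (M + 1)‖ + ‖G‖ + ‖(1 : ℂ)‖ := by
          have := norm_add_le ((M : ℂ) * q ^ (M + 1)) (-G)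
          simp only [sub_eq_add_neg, norm_neg] at this ⊢
          linarith
      _ = (M : ℝ) + ‖G‖ + 1 := by
          rw [norm_mul, norm_pow, hq]; simp
      _ ≤ (M : ℝ) + 1 + 2 / ‖q - 1‖ := by linarith
  calc ‖(M : ℂ) * q ^ (M + 1) - G + 1‖ / ‖q - 1‖
      ≤ ((M : ℝ) + 1 + 2 / ‖q - 1‖) / ‖q - 1‖ := by
        exact div_le_div_of_nonneg_right hnum hd.le |>.trans_eq rfl
    _ = ((M : ℝ) + 1) / ‖q - 1‖ + 2 / ‖q - 1‖ ^ 2 := by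
        field_simp

/-- Jordan-type lower bound for `|e^{ix} - 1|`. -/
private lemma lower (x : ℝ) (hx : |x| ≤ Real.pi) :
    2 / Real.pi * |x| ≤ ‖Complex.exp ((x : ℂ) * Complex.I) - 1‖ := by
  have hfac : Complex.exp ((x : ℂ) * Complex.I) - 1
      = Complex.exp (((x / 2 : ℝ) : ℂ) * Complex.I)
        * (2 * Complex.sin ((x / 2 : ℝ) : ℂ) * Complex.I) := by
    have h2 : (2 : ℂ) * Complex.sin ((x / 2 : ℝ) : ℂ) * Complex.I
        = Complex.exp (((x / 2 : ℝ) : ℂ) * Complex.I)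
          - Complex.exp (-((x / 2 : ℝ) : ℂ) * Complex.I) := by
      rw [Complex.sin]
      linear_combination (Complex.exp (-((x / 2 : ℝ) : ℂ) * Complex.I)
        - Complex.exp (((x / 2 : ℝ) : ℂ) * Complex.I)) * Complex.I_sq
    rw [h2, mul_sub, ← Complex.exp_add, ← Complex.exp_add]
    have e1 : ((x / 2 : ℝ) : ℂ) * Complex.I + ((x / 2 : ℝ) : ℂ) * Complex.I
        = (x : ℂ) * Complex.I := by push_cast; ring
    have e2 : ((x / 2 : ℝ) : ℂ) * Complex.I + -((x / 2 : ℝ) : ℂ) * Complex.I = 0 := by ring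
    rw [e1, e2, Complex.exp_zero]
  rw [hfac, norm_mul, Complex.norm_exp_ofReal_mul_I, one_mul, norm_mul, norm_mul,
    Complex.norm_I, Complex.norm_two, ← Complex.ofReal_sin, Complex.norm_real, Real.norm_eq_abs, mul_one]
  have hj : 2 / Real.pi * |x / 2| ≤ |Real.sin (x / 2)| := by
    apply Real.mul_abs_le_abs_sin
    rw [abs_div]
    simp only [_root_.abs_two]
    linarith
  rw [abs_div, _root_.abs_two] at hj
  linarith

/-- shift by `2π`. -/
private lemma exp_shift (x : ℝ) :
    Complex.exp (((x - 2 * Real.pi : ℝ) : ℂ) * Complex.I) = Complex.exp ((x : ℂ) * Complex.I) := by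
  rw [show ((x : ℂ) * Complex.I) = ((x - 2 * Real.pi : ℝ) : ℂ) * Complex.I
      + (1 : ℤ) * (2 * (Real.pi : ℂ) * Complex.I) by push_cast; ring,
    Complex.exp_add, Complex.exp_int_mul_two_pi_mul_I, mul_one]

/-- The middle-region pointwise bound. -/
private lemma mid_bound (M : ℕ) (hM : 2 ≤ M) (x t : ℝ) (ht : 1 / (M : ℝ) ≤ t)
    (h : 2 / Real.pi * t ≤ ‖Complex.exp ((x : ℂ) * Complex.I) - 1‖) :
    ‖∑ k ∈ Finset.range (M + 1), (k : ℂ) * Complex.exp ((x : ℂ) * Complex.I) ^ k‖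
      ≤ 12 * M / t := by
  have hM0 : (0 : ℝ) < M := by positivity
  have ht0 : (0 : ℝ) < t := lt_of_lt_of_le (by positivity) ht
  have hMt : (1 : ℝ) ≤ M * t := by
    rw [div_le_iff₀ hM0] at ht; linarith
  set q : ℂ := Complex.exp ((x : ℂ) * Complex.I) with hqdef
  set d : ℝ := ‖q - 1‖ with hddef
  have hd2 : t / 2 ≤ d := by
    have hpi : Real.pi ≤ 4 := Real.pi_le_four
    have : t / 2 ≤ 2 / Real.pi * t := by
      rw [div_mul_eq_mul_div, le_div_iff₀ Real.pi_pos]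
      nlinarith
    linarith
  have hd : 0 < d := by linarith
  have hq1 : q ≠ 1 := by
    intro hcontr
    rw [hcontr] at hddef
    simp at hddef
    rw [hddef] at hd
    exact lt_irrefl 0 hd
  have habs : ‖q‖ = 1 := Complex.norm_exp_ofReal_mul_I x
  refine (abs_sum_le M q habs hq1).trans ?_
  have hdsq : t ^ 2 / 4 ≤ d ^ 2 := by nlinarith
  have hA : ((M : ℝ) + 1) / d ≤ 3 * M / t := by
    rw [div_le_div_iff₀ hd ht0]
    have hMcast : (2 : ℝ) ≤ M := by exact_mod_cast hM
    nlinarith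
  have hB : (2 : ℝ) / d ^ 2 ≤ 9 * M / t := by
    rw [div_le_div_iff₀ (by positivity) ht0]
    nlinarith [mul_le_mul_of_nonneg_right hMt (le_of_lt ht0)]
  calc ((M : ℝ) + 1) / d + 2 / d ^ 2 ≤ 3 * M / t + 9 * M / t := add_le_add hA hB
    _ = 12 * M / t := by ring

theorem stmt_12 : ∃ C : ℝ, 0 < C ∧ ∀ M : ℕ, 2 ≤ M →
    (∫ x in (0:ℝ)..(2 * Real.pi),
        ‖∑ k ∈ Finset.range (M + 1), (k : ℂ) * Complex.exp (Complex.I * k * x)‖)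
      ≤ C * M * Real.log M := by
  refine ⟨100, by norm_num, fun M hM => ?_⟩
  have hM0 : (0 : ℝ) < M := by positivity
  have hMcast : (2 : ℝ) ≤ M := by exact_mod_cast hM
  have hpi := Real.pi_pos
  have hpi3 : 3 < Real.pi := Real.pi_gt_three
  have hpi4 : Real.pi ≤ 4 := Real.pi_le_four
  have hlog2 : (0.6931471803 : ℝ) < Real.log 2 := Real.log_two_gt_d9
  have hlogM : Real.log 2 ≤ Real.log M := Real.log_le_log (by norm_num) hMcast
  have h1M0 : (0 : ℝ) < 1 / M := by positivity
  have h1Mpi : 1 / (M : ℝ) ≤ Real.pi := by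
    have : 1 / (M : ℝ) ≤ 1 := by rw [div_le_one hM0]; linarith
    linarith
  set G : ℝ → ℝ := fun x =>
    ‖∑ k ∈ Finset.range (M + 1), (k : ℂ) * Complex.exp ((x : ℂ) * Complex.I) ^ k‖
    with hGdef
  have hGeq : ∀ x : ℝ,
      ‖∑ k ∈ Finset.range (M + 1), (k : ℂ) * Complex.exp (Complex.I * k * x)‖
        = G x := by
    intro x
    simp only [hGdef]
    congr 1
    refine Finset.sum_congr rfl fun k _ => ?_
    rw [show (Complex.I * (k : ℂ) * (x : ℂ)) = (k : ℂ) * ((x : ℂ) * Complex.I) by ring,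
      Complex.exp_nat_mul]
  have hGcont : Continuous G := by
    apply continuous_norm.comp
    apply continuous_finset_sum
    intro k _
    exact continuous_const.mul
      ((Complex.continuous_exp.comp (Complex.continuous_ofReal.mul continuous_const)).pow k)
  have hGi : ∀ a b : ℝ, IntervalIntegrable G MeasureTheory.volume a b := fun a b =>
    hGcont.intervalIntegrable a b
  have hGle : ∀ x : ℝ, G x ≤ ((M : ℝ) + 1) * M := by
    intro x
    simp only [hGdef]
    refine (norm_sum_le _ _).trans ?_
    calc ∑ k ∈ Finset.range (M + 1), ‖(k : ℂ) * Complex.exp ((x : ℂ) * Complex.I) ^ k‖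
        = ∑ k ∈ Finset.range (M + 1), (k : ℝ) := by
          refine Finset.sum_congr rfl fun k _ => ?_
          rw [norm_mul, norm_pow, Complex.norm_exp_ofReal_mul_I, one_pow, mul_one,
            Complex.norm_natCast]
      _ ≤ ∑ k ∈ Finset.range (M + 1), (M : ℝ) := by
          refine Finset.sum_le_sum fun k hk => ?_
          exact_mod_cast Nat.le_of_lt_succ (Finset.mem_range.mp hk)
      _ = ((M : ℝ) + 1) * M := by
          rw [Finset.sum_const, Finset.card_range, nsmul_eq_mul]
          push_cast; ring
  have hGnn : ∀ x : ℝ, 0 ≤ G x := fun x => by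
    simp only [hGdef]; exact norm_nonneg _
  have hedge : ∀ a b : ℝ, |b - a| = 1 / M → (∫ x in a..b, G x) ≤ (M : ℝ) + 1 := by
    intro a b hab
    have h : ‖∫ x in a..b, G x‖ ≤ ((M : ℝ) + 1) * M * |b - a| := by
      apply intervalIntegral.norm_integral_le_of_norm_le_const
      intro x _
      rw [Real.norm_eq_abs, _root_.abs_of_nonneg (hGnn x)]
      exact hGle x
    calc (∫ x in a..b, G x) ≤ |∫ x in a..b, G x| := le_abs_self _
      _ = ‖∫ x in a..b, G x‖ := (Real.norm_eq_abs _).symm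
      _ ≤ ((M : ℝ) + 1) * M * |b - a| := h
      _ = (M : ℝ) + 1 := by rw [hab]; field_simp
  have h0uIcc : (0 : ℝ) ∉ Set.uIcc (1 / (M : ℝ)) Real.pi := by
    rw [Set.uIcc_of_le h1Mpi]
    intro hmem
    rw [Set.mem_Icc] at hmem
    linarith [hmem.1]
  have hintinv : (∫ x in (1 / (M : ℝ))..Real.pi, 12 * (M : ℝ) * x⁻¹)
      = 12 * M * Real.log (Real.pi * M) := by
    rw [intervalIntegral.integral_const_mul, integral_inv h0uIcc,
      show Real.pi / (1 / (M : ℝ)) = Real.pi * M by field_simp]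
  have hlogpi : Real.log (Real.pi * M) ≤ 3 * Real.log M := by
    rw [Real.log_mul (ne_of_gt hpi) (ne_of_gt hM0)]
    have h1 : Real.log Real.pi ≤ Real.log 4 := Real.log_le_log hpi hpi4
    have h2 : Real.log 4 = 2 * Real.log 2 := by
      rw [show (4 : ℝ) = 2 ^ 2 by norm_num, Real.log_pow]; push_cast; ring
    linarith
  -- Piece 2
  have hP2 : (∫ x in (1 / (M : ℝ))..Real.pi, G x) ≤ 36 * M * Real.log M := by
    have hmono : (∫ x in (1 / (M : ℝ))..Real.pi, G x)
        ≤ ∫ x in (1 / (M : ℝ))..Real.pi, 12 * (M : ℝ) * x⁻¹ := by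
      apply intervalIntegral.integral_mono_on h1Mpi (hGi _ _)
      · apply ContinuousOn.intervalIntegrable
        apply continuousOn_const.mul
        apply ContinuousOn.inv₀ continuousOn_id
        intro x hx
        rw [Set.uIcc_of_le h1Mpi] at hx
        exact ne_of_gt (lt_of_lt_of_le h1M0 hx.1)
      · intro x hx
        have h0 : 0 < x := lt_of_lt_of_le h1M0 hx.1
        have hlb : 2 / Real.pi * x ≤ ‖Complex.exp ((x : ℂ) * Complex.I) - 1‖ := by
          have := lower x (by rw [abs_of_pos h0]; exact hx.2)
          rwa [abs_of_pos h0] at this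
        have := mid_bound M hM x x hx.1 hlb
        simp only [hGdef]
        calc ‖∑ k ∈ Finset.range (M + 1),
              (k : ℂ) * Complex.exp ((x : ℂ) * Complex.I) ^ k‖ ≤ 12 * M / x := this
          _ = 12 * M * x⁻¹ := by rw [div_eq_mul_inv]
    calc (∫ x in (1 / (M : ℝ))..Real.pi, G x) ≤ 12 * M * Real.log (Real.pi * M) := by
          rw [← hintinv]; exact hmono
      _ ≤ 12 * M * (3 * Real.log M) :=
          mul_le_mul_of_nonneg_left hlogpi (by positivity)
      _ = 36 * M * Real.log M := by ring
  -- Piece 3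
  have hP3 : (∫ x in Real.pi..(2 * Real.pi - 1 / M), G x) ≤ 36 * M * Real.log M := by
    have hintinv3 : (∫ x in Real.pi..(2 * Real.pi - 1 / (M : ℝ)),
        12 * (M : ℝ) * (2 * Real.pi - x)⁻¹) = 12 * M * Real.log (Real.pi * M) := by
      rw [intervalIntegral.integral_const_mul]
      have hsub := intervalIntegral.integral_comp_sub_left
        (a := Real.pi) (b := 2 * Real.pi - 1 / (M : ℝ)) (fun y : ℝ => y⁻¹) (2 * Real.pi)
      rw [hsub, show 2 * Real.pi - (2 * Real.pi - 1 / (M : ℝ)) = 1 / (M : ℝ) by ring,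
        show 2 * Real.pi - Real.pi = Real.pi by ring, integral_inv h0uIcc,
        show Real.pi / (1 / (M : ℝ)) = Real.pi * M by field_simp]
    have hmono : (∫ x in Real.pi..(2 * Real.pi - 1 / (M : ℝ)), G x)
        ≤ ∫ x in Real.pi..(2 * Real.pi - 1 / (M : ℝ)), 12 * (M : ℝ) * (2 * Real.pi - x)⁻¹ := by
      apply intervalIntegral.integral_mono_on (by linarith) (hGi _ _)
      · apply ContinuousOn.intervalIntegrable
        apply continuousOn_const.mul
        apply ContinuousOn.inv₀ (continuousOn_const.sub continuousOn_id)
        intro x hx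
        rw [Set.uIcc_of_le (by linarith : Real.pi ≤ 2 * Real.pi - 1 / (M : ℝ))] at hx
        have h2x : 1 / (M : ℝ) ≤ 2 * Real.pi - x := by linarith [hx.2]
        exact ne_of_gt (lt_of_lt_of_le h1M0 h2x)
      · intro x hx
        have hx1 : Real.pi ≤ x := hx.1
        have hx2 : x ≤ 2 * Real.pi - 1 / M := hx.2
        have ht1 : 1 / (M : ℝ) ≤ 2 * Real.pi - x := by linarith
        have hlb : 2 / Real.pi * (2 * Real.pi - x)
            ≤ ‖Complex.exp ((x : ℂ) * Complex.I) - 1‖ := by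
          have hxl : |x - 2 * Real.pi| ≤ Real.pi := by
            rw [abs_of_nonpos (by linarith)]; linarith
          have hlow := lower (x - 2 * Real.pi) hxl
          rw [exp_shift x, abs_of_nonpos (by linarith : x - 2 * Real.pi ≤ 0)] at hlow
          calc 2 / Real.pi * (2 * Real.pi - x) = 2 / Real.pi * -(x - 2 * Real.pi) := by ring
            _ ≤ _ := hlow
        have := mid_bound M hM x (2 * Real.pi - x) ht1 hlb
        simp only [hGdef]
        calc ‖∑ k ∈ Finset.range (M + 1),
              (k : ℂ) * Complex.exp ((x : ℂ) * Complex.I) ^ k‖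
            ≤ 12 * M / (2 * Real.pi - x) := this
          _ = 12 * M * (2 * Real.pi - x)⁻¹ := by rw [div_eq_mul_inv]
    calc (∫ x in Real.pi..(2 * Real.pi - 1 / (M : ℝ)), G x)
        ≤ 12 * M * Real.log (Real.pi * M) := by rw [← hintinv3]; exact hmono
      _ ≤ 12 * M * (3 * Real.log M) := mul_le_mul_of_nonneg_left hlogpi (by positivity)
      _ = 36 * M * Real.log M := by ring
  have hP1 : (∫ x in (0 : ℝ)..(1 / M), G x) ≤ (M : ℝ) + 1 :=
    hedge 0 (1 / M) (by rw [sub_zero, abs_of_pos h1M0])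
  have hP4 : (∫ x in (2 * Real.pi - 1 / M)..(2 * Real.pi), G x) ≤ (M : ℝ) + 1 :=
    hedge _ _ (by rw [show 2 * Real.pi - (2 * Real.pi - 1 / (M : ℝ)) = 1 / M by ring,
      abs_of_pos h1M0])
  have key3 := intervalIntegral.integral_add_adjacent_intervals
    (hGi Real.pi (2 * Real.pi - 1 / M)) (hGi (2 * Real.pi - 1 / M) (2 * Real.pi))
  have key2 := intervalIntegral.integral_add_adjacent_intervals
    (hGi (1 / M) Real.pi) (hGi Real.pi (2 * Real.pi))
  have key1 := intervalIntegral.integral_add_adjacent_intervals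
    (hGi 0 (1 / M)) (hGi (1 / M) (2 * Real.pi))
  have hsplit : (∫ x in (0 : ℝ)..(2 * Real.pi), G x)
      = (∫ x in (0 : ℝ)..(1 / M), G x) + (∫ x in (1 / (M : ℝ))..Real.pi, G x)
        + (∫ x in Real.pi..(2 * Real.pi - 1 / M), G x)
        + (∫ x in (2 * Real.pi - 1 / M)..(2 * Real.pi), G x) := by
    rw [← key1, ← key2, ← key3]; ring
  have hfinal : (∫ x in (0 : ℝ)..(2 * Real.pi), G x) ≤ 100 * M * Real.log M := by
    rw [hsplit]
    have hlM : (0.69 : ℝ) ≤ Real.log M := by linarith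
    have hmul : (0.69 : ℝ) * M ≤ Real.log M * M :=
      mul_le_mul_of_nonneg_right hlM (by positivity)
    nlinarith [hP1, hP2, hP3, hP4]
  calc (∫ x in (0 : ℝ)..(2 * Real.pi),
        ‖∑ k ∈ Finset.range (M + 1), (k : ℂ) * Complex.exp (Complex.I * k * x)‖)
      = ∫ x in (0 : ℝ)..(2 * Real.pi), G x := by
        simp only [hGeq]
    _ ≤ 100 * M * Real.log M := hfinal
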